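/- The underlying undirected graph of G*(I,a,b) contains a subgraph isomorphic to the d-th subdivision of the underlying undirected graph of G. -/

import Mathlib

/-- A homomorphism of digraphs maps arcs to arcs. -/
def Digraph.IsHom {V W : Type*} (G : Digraph V) (H : Digraph W) (f : V → W) : Prop :=
  ∀ u v, G.Adj u v → H.Adj (f u) (f v)

/-- An oriented graph: at most one arc between any two vertices (hence no loops). -/
def Digraph.Oriented {V : Type*} (G : Digraph V) : Prop :=
  ∀ u v, G.Adj u v → ¬ G.Adj v u

/-- The arcs of a digraph. -/
def Digraph.Arcs {V : Type*} (G : Digraph V) : Type _ := {p : V × V // G.Adj p.1 p.2}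

/-- Vertex type of the replacement construction `G*(I,a,b)`: original vertices plus, for
each arc, the internal vertices of a copy of the cycle of length `L` with distinguished
vertices `a` (position `0`) and `b` (position `d+1`). -/
def RVert {V : Type*} (G : Digraph V) (L d : ℕ) : Type _ :=
  V ⊕ (G.Arcs × {i : Fin L // i.val ≠ 0 ∧ i.val ≠ d + 1})

/-- The vertex of `G*(I,a,b)` corresponding to position `i` on the cycle copy of arc `e`:
position `0` (the vertex `a`) is identified with the tail, position `d+1` (the vertex `b`)
with the head of `e`. -/
def toVert {V : Type*} (G : Digraph V) (L d : ℕ) (e : G.Arcs) (i : Fin L) : RVert G L d :=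
  if h0 : i.val = 0 then Sum.inl e.1.1
  else if h1 : i.val = d + 1 then Sum.inl e.1.2
  else Sum.inr (e, ⟨i, h0, h1⟩)

/-- Cyclic successor on `Fin m`. -/
def cyc {m : ℕ} (k : Fin m) : Fin m := ⟨(k.val + 1) % m, Nat.mod_lt _ k.pos⟩

/-- The replacement construction `G*(I,a,b)`: each arc of `G` is replaced by a disjoint copy
of the directed cycle of length `L` whose distinguished vertices `a`, `b` (at directed
distance `d+1` along the cycle) are identified with tail and head of the arc. -/
def Replace {V : Type*} (G : Digraph V) (L d : ℕ) : Digraph (RVert G L d) where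
  Adj x y := ∃ (e : G.Arcs) (i : Fin L), x = toVert G L d e i ∧ y = toVert G L d e (cyc i)

/-- Image of an arc under a digraph homomorphism. -/
def Digraph.mapArc {V W : Type*} (G : Digraph V) (H : Digraph W) (g : V → W)
    (hg : G.IsHom H g) : G.Arcs → H.Arcs :=
  fun e => ⟨(g e.1.1, g e.1.2), hg _ _ e.2⟩

/-- Action of the replacement functor on homomorphisms. -/
def RMap {V W : Type*} (G : Digraph V) (H : Digraph W) (L d : ℕ) (g : V → W)
    (hg : G.IsHom H g) : RVert G L d → RVert H L d :=
  Sum.map g (fun p => (G.mapArc H g hg p.1, p.2))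

/-- The underlying undirected (simple) graph of a digraph. -/
def Digraph.underlying {V : Type*} (G : Digraph V) : SimpleGraph V where
  Adj u v := u ≠ v ∧ (G.Adj u v ∨ G.Adj v u)
  symm := ⟨fun _ _ h => ⟨Ne.symm h.1, h.2.symm⟩⟩
  loopless := ⟨fun _ h => h.1 rfl⟩

/-- Auxiliary (oriented) relation of the `d`-th subdivision of a simple graph: each edge is
replaced by a path with `d` internal vertices; the smaller endpoint of an edge attaches at
position `0`, the larger at position `d-1`. For `d = 0`, original adjacency is kept. -/
def SubdivRel {V : Type*} [LinearOrder V] (H : SimpleGraph V) (d : ℕ) :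
    (V ⊕ (H.edgeSet × Fin d)) → (V ⊕ (H.edgeSet × Fin d)) → Prop
  | Sum.inl u, Sum.inl v => d = 0 ∧ H.Adj u v
  | Sum.inl u, Sum.inr (e, i) =>
      (i.val = 0 ∧ u ∈ e.val ∧ ∀ w ∈ e.val, u ≤ w) ∨
      (i.val = d - 1 ∧ u ∈ e.val ∧ ∀ w ∈ e.val, w ≤ u)
  | Sum.inr _, Sum.inl _ => False
  | Sum.inr (e, i), Sum.inr (e', j) => e = e' ∧ j.val = i.val + 1

/-- The `d`-th subdivision `Sub_d(H)` of a simple graph `H`: every edge is replaced by a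
path with `d` internal vertices. -/
def Subdiv {V : Type*} [LinearOrder V] (H : SimpleGraph V) (d : ℕ) :
    SimpleGraph (V ⊕ (H.edgeSet × Fin d)) where
  Adj x y := SubdivRel H d x y ∨ SubdivRel H d y x
  symm := ⟨fun _ _ h => h.symm⟩
  loopless := by
    constructor
    rintro (u | ⟨e, i⟩) h
    · rcases h with ⟨_, h⟩ | ⟨_, h⟩ <;> exact H.loopless.irrefl u h
    · rcases h with ⟨_, h⟩ | ⟨_, h⟩ <;> simp [SubdivRel] at h

/-- `f` embeds `H` as a (not necessarily induced) subgraph of `G`. -/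
def IsSubgraphEmb {V W : Type*} (H : SimpleGraph V) (G : SimpleGraph W) (f : V → W) : Prop :=
  Function.Injective f ∧ ∀ u v, H.Adj u v → G.Adj (f u) (f v)

/-- A class of finite graphs, one vertex set `Fin n` for each size. -/
abbrev GraphClass := Set (Σ n, SimpleGraph (Fin n))

/-- `H` is a subgraph of some member of the class `C`. -/
def ContainsAsSubgraph (C : GraphClass) {V : Type*} (H : SimpleGraph V) : Prop :=
  ∃ (n : ℕ) (G : SimpleGraph (Fin n)), ⟨n, G⟩ ∈ C ∧ ∃ f : V → Fin n, IsSubgraphEmb H G f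

/-- `C` is monotone: closed under taking (not necessarily induced) subgraphs. -/
def MonotoneClass (C : GraphClass) : Prop :=
  ∀ (n : ℕ) (G : SimpleGraph (Fin n)) (m : ℕ) (H : SimpleGraph (Fin m)),
    ⟨n, G⟩ ∈ C → (∃ f, IsSubgraphEmb H G f) → ⟨m, H⟩ ∈ C

/-- `C` is nowhere dense: for every `p` there is `N` such that the `p`-th subdivision of
`K_N` is a subgraph of no member of `C`. -/
def NowhereDense (C : GraphClass) : Prop :=
  ∀ p : ℕ, ∃ N : ℕ, ¬ ContainsAsSubgraph C (Subdiv (⊤ : SimpleGraph (Fin N)) p)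


section AuxStmt4

variable {V : Type*} [LinearOrder V]

/-- The smaller endpoint of an unordered pair. -/
def sInf2 : Sym2 V → V := Sym2.lift ⟨min, min_comm⟩

/-- The larger endpoint of an unordered pair. -/
def sSup2 : Sym2 V → V := Sym2.lift ⟨max, max_comm⟩

lemma sym2_inf_sup (s : Sym2 V) : s(sInf2 s, sSup2 s) = s := by
  induction s using Sym2.inductionOn with
  | _ a b =>
    rcases le_total a b with h | h
    · simp [sInf2, sSup2, min_eq_left h, max_eq_right h]
    · rw [Sym2.eq_swap]
      simp [sInf2, sSup2, min_eq_right h, max_eq_left h]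

lemma sInf2_mem (s : Sym2 V) : sInf2 s ∈ s := by
  induction s using Sym2.inductionOn with
  | _ a b =>
    simp only [sInf2, Sym2.lift_mk, Sym2.mem_iff]
    rcases le_total a b with h | h
    · exact Or.inl (min_eq_left h)
    · exact Or.inr (min_eq_right h)

lemma sSup2_mem (s : Sym2 V) : sSup2 s ∈ s := by
  induction s using Sym2.inductionOn with
  | _ a b =>
    simp only [sSup2, Sym2.lift_mk, Sym2.mem_iff]
    rcases le_total a b with h | h
    · exact Or.inr (max_eq_right h)
    · exact Or.inl (max_eq_left h)

lemma sInf2_le (s : Sym2 V) : ∀ w ∈ s, sInf2 s ≤ w := by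
  induction s using Sym2.inductionOn with
  | _ a b =>
    intro w hw
    rcases Sym2.mem_iff.mp hw with rfl | rfl
    · simpa [sInf2] using min_le_left a b
    · simpa [sInf2] using min_le_right a b

lemma le_sSup2 (s : Sym2 V) : ∀ w ∈ s, w ≤ sSup2 s := by
  induction s using Sym2.inductionOn with
  | _ a b =>
    intro w hw
    rcases Sym2.mem_iff.mp hw with rfl | rfl
    · simpa [sSup2] using le_max_left a b
    · simpa [sSup2] using le_max_right a b

lemma underlying_adj_inf_sup (G : Digraph V) (e : G.underlying.edgeSet) :
    G.underlying.Adj (sInf2 e.val) (sSup2 e.val) := by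
  have h : s(sInf2 e.val, sSup2 e.val) ∈ G.underlying.edgeSet := by
    rw [sym2_inf_sup]; exact e.2
  exact (SimpleGraph.mem_edgeSet _).mp h

open Classical in
/-- The arc of `G` corresponding to an edge of the underlying graph. -/
noncomputable def arcOf (G : Digraph V) (e : G.underlying.edgeSet) : G.Arcs :=
  if h : G.Adj (sInf2 e.val) (sSup2 e.val) then ⟨(sInf2 e.val, sSup2 e.val), h⟩
  else ⟨(sSup2 e.val, sInf2 e.val), ((underlying_adj_inf_sup G e).2.resolve_left h)⟩

lemma arcOf_sym2 (G : Digraph V) (e : G.underlying.edgeSet) :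
    s((arcOf G e).1.1, (arcOf G e).1.2) = e.val := by
  by_cases hc : G.Adj (sInf2 e.val) (sSup2 e.val)
  · rw [show arcOf G e = ⟨(sInf2 e.val, sSup2 e.val), hc⟩ from dif_pos hc]
    exact sym2_inf_sup _
  · rw [show arcOf G e = ⟨(sSup2 e.val, sInf2 e.val),
      ((underlying_adj_inf_sup G e).2.resolve_left hc)⟩ from dif_neg hc]
    rw [Sym2.eq_swap]; exact sym2_inf_sup _

lemma arcOf_ne (G : Digraph V) (e : G.underlying.edgeSet) :
    (arcOf G e).1.1 ≠ (arcOf G e).1.2 := by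
  have h := (underlying_adj_inf_sup G e).1
  by_cases hc : G.Adj (sInf2 e.val) (sSup2 e.val)
  · rw [show arcOf G e = ⟨(sInf2 e.val, sSup2 e.val), hc⟩ from dif_pos hc]
    exact h
  · rw [show arcOf G e = ⟨(sSup2 e.val, sInf2 e.val),
      ((underlying_adj_inf_sup G e).2.resolve_left hc)⟩ from dif_neg hc]
    exact h.symm

open Classical in
/-- The subgraph embedding of `Sub_d(underlying G)` into `underlying (G*(I,a,b))`. -/
noncomputable def embF (G : Digraph V) (d : ℕ) :
    (V ⊕ (G.underlying.edgeSet × Fin d)) → RVert G (3 * (d + 1)) d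
  | Sum.inl u => Sum.inl u
  | Sum.inr (e, i) =>
      if G.Adj (sInf2 e.val) (sSup2 e.val) then
        toVert G (3 * (d + 1)) d (arcOf G e) ⟨i.val + 1, by have := i.isLt; omega⟩
      else
        toVert G (3 * (d + 1)) d (arcOf G e) ⟨d - i.val, by omega⟩

lemma toVert_internal (G : Digraph V) (L d : ℕ) (e : G.Arcs) (p : Fin L)
    (h0 : p.val ≠ 0) (h1 : p.val ≠ d + 1) :
    toVert G L d e p = Sum.inr (e, ⟨p, h0, h1⟩) := by
  simp [toVert, h0, h1]
  rfl

lemma toVert_zero (G : Digraph V) (L d : ℕ) (hL : 0 < L) (e : G.Arcs) :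
    toVert G L d e ⟨0, hL⟩ = Sum.inl e.1.1 := by
  simp [toVert]
  rfl

lemma toVert_dsucc (G : Digraph V) (L d : ℕ) (hL : d + 1 < L) (e : G.Arcs) :
    toVert G L d e ⟨d + 1, hL⟩ = Sum.inl e.1.2 := by
  simp [toVert]
  rfl

lemma embF_inr_pos (G : Digraph V) (d : ℕ) (e : G.underlying.edgeSet) (i : Fin d)
    (hadj : G.Adj (sInf2 e.val) (sSup2 e.val)) :
    embF G d (Sum.inr (e, i)) = Sum.inr (arcOf G e,
      ⟨⟨i.val + 1, by have := i.isLt; omega⟩,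
        show i.val + 1 ≠ 0 ∧ i.val + 1 ≠ d + 1 by have := i.isLt; omega⟩) := by
  simp only [embF, if_pos hadj]
  exact toVert_internal G (3 * (d + 1)) d (arcOf G e) ⟨i.val + 1, by have := i.isLt; omega⟩
    (show i.val + 1 ≠ 0 by omega) (show i.val + 1 ≠ d + 1 by have := i.isLt; omega)

lemma embF_inr_neg (G : Digraph V) (d : ℕ) (e : G.underlying.edgeSet) (i : Fin d)
    (hadj : ¬ G.Adj (sInf2 e.val) (sSup2 e.val)) :
    embF G d (Sum.inr (e, i)) = Sum.inr (arcOf G e,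
      ⟨⟨d - i.val, by omega⟩,
        show d - i.val ≠ 0 ∧ d - i.val ≠ d + 1 by have := i.isLt; omega⟩) := by
  simp only [embF, if_neg hadj]
  exact toVert_internal G (3 * (d + 1)) d (arcOf G e) ⟨d - i.val, by omega⟩
    (show d - i.val ≠ 0 by have := i.isLt; omega) (show d - i.val ≠ d + 1 by omega)

lemma repl_step' (G : Digraph V) (d : ℕ) (e : G.Arcs) (hne : e.1.1 ≠ e.1.2)
    (p q : Fin (3 * (d + 1))) (hq : q.val = p.val + 1) (hp : p.val ≤ d) :
    (Replace G (3 * (d + 1)) d).underlying.Adj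
      (toVert G (3 * (d + 1)) d e p) (toVert G (3 * (d + 1)) d e q) := by
  refine ⟨?_, Or.inl ⟨e, p, rfl, ?_⟩⟩
  · by_cases h0 : p.val = 0
    · rw [show p = ⟨0, by omega⟩ from Fin.ext h0, toVert_zero]
      by_cases h1 : q.val = d + 1
      · rw [show q = ⟨d + 1, by omega⟩ from Fin.ext h1, toVert_dsucc]
        intro hcon; exact hne (Sum.inl.inj hcon)
      · rw [toVert_internal G _ d e q (by omega) h1]
        exact Sum.inl_ne_inr
    · rw [toVert_internal G _ d e p h0 (by omega)]
      by_cases h1 : q.val = d + 1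
      · rw [show q = ⟨d + 1, by omega⟩ from Fin.ext h1, toVert_dsucc]
        exact Sum.inr_ne_inl
      · rw [toVert_internal G _ d e q (by omega) h1]
        intro hcon
        have hval := congrArg
          (fun x : G.Arcs × {k : Fin (3 * (d + 1)) // k.val ≠ 0 ∧ k.val ≠ d + 1} =>
            (x.2.1 : ℕ)) (Sum.inr.inj hcon)
        dsimp only at hval
        omega
  · congr 1
    apply Fin.ext
    simp [cyc, hq, Nat.mod_eq_of_lt (show p.val + 1 < 3 * (d + 1) by omega)]

end AuxStmt4

/-- The underlying undirected graph of `G*(I,a,b)` contains a subgraph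
isomorphic to the `d`-th subdivision of the underlying undirected graph of `G`. -/
theorem stmt4 {V : Type*} [LinearOrder V] (d : ℕ) (G : Digraph V) :
    ∃ f, IsSubgraphEmb (Subdiv G.underlying d)
      (Replace G (3 * (d + 1)) d).underlying f := by
  classical
  refine ⟨embF G d, ?_, ?_⟩
  · -- injectivity
    rintro (u | ⟨e, i⟩) (v | ⟨e', j⟩) h
    · simp only [embF] at h
      injection h with h'
      rw [h']
    · exfalso
      by_cases hadj : G.Adj (sInf2 e'.val) (sSup2 e'.val) <;>
        [rw [embF_inr_pos G d e' j hadj] at h; rw [embF_inr_neg G d e' j hadj] at h] <;>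
      exact Sum.inl_ne_inr h
    · exfalso
      by_cases hadj : G.Adj (sInf2 e.val) (sSup2 e.val) <;>
        [rw [embF_inr_pos G d e i hadj] at h; rw [embF_inr_neg G d e i hadj] at h] <;>
      exact Sum.inr_ne_inl h
    · have hee : e = e' ∧ (i : ℕ) = (j : ℕ) := by
        by_cases h1 : G.Adj (sInf2 e.val) (sSup2 e.val) <;>
          by_cases h2 : G.Adj (sInf2 e'.val) (sSup2 e'.val) <;>
          [ rw [embF_inr_pos G d e i h1, embF_inr_pos G d e' j h2] at h;
            rw [embF_inr_pos G d e i h1, embF_inr_neg G d e' j h2] at h;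
            rw [embF_inr_neg G d e i h1, embF_inr_pos G d e' j h2] at h;
            rw [embF_inr_neg G d e i h1, embF_inr_neg G d e' j h2] at h ] <;>
        · injection h with h'
          have ha : arcOf G e = arcOf G e' := congrArg Prod.fst h'
          have hval := congrArg
            (fun x : G.Arcs × {k : Fin (3 * (d + 1)) // k.val ≠ 0 ∧ k.val ≠ d + 1} =>
              (x.2.1 : ℕ)) h'
          dsimp only at hval
          have hev : e = e' := by
            apply Subtype.ext
            rw [← arcOf_sym2 G e, ← arcOf_sym2 G e', ha]
          subst hev
          first
            | exact absurd h1 h2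
            | exact absurd h2 h1
            | (refine ⟨rfl, ?_⟩; have := i.isLt; have := j.isLt; omega)
      obtain ⟨rfl, hij⟩ := hee
      simp [Fin.ext_iff, hij]
  · -- adjacency
    have key : ∀ x y, SubdivRel G.underlying d x y →
        (Replace G (3 * (d + 1)) d).underlying.Adj (embF G d x) (embF G d y) := by
      rintro (u | ⟨e, i⟩) (v | ⟨e', j⟩) h
      · obtain ⟨hd0, huv⟩ := h
        subst hd0
        set e : G.underlying.edgeSet := ⟨s(u, v), huv⟩ with he
        have hstep := repl_step' G 0 (arcOf G e) (arcOf_ne G e)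
          ⟨0, by omega⟩ ⟨0 + 1, by omega⟩ rfl (Nat.le_refl 0)
        rw [toVert_zero, toVert_dsucc] at hstep
        have hs : s((arcOf G e).1.1, (arcOf G e).1.2) = s(u, v) := arcOf_sym2 G e
        rw [Sym2.eq_iff] at hs
        show (Replace G (3 * (0 + 1)) 0).underlying.Adj (Sum.inl u) (Sum.inl v)
        rcases hs with ⟨h1, h2⟩ | ⟨h1, h2⟩
        · rw [← h1, ← h2]; exact hstep
        · rw [← h1, ← h2]; exact hstep.symm
      · -- inl u -- inr (e', j)
        have hiLt := j.isLt
        have hne := arcOf_ne G e'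
        show (Replace G (3 * (d + 1)) d).underlying.Adj (Sum.inl u) (embF G d (Sum.inr (e', j)))
        rcases h with ⟨hj0, hmem, hmin⟩ | ⟨hjd, hmem, hmax⟩
        · have hu : u = sInf2 e'.val :=
            le_antisymm (hmin _ (sInf2_mem _)) (sInf2_le _ _ hmem)
          by_cases hadj : G.Adj (sInf2 e'.val) (sSup2 e'.val)
          · have ha1 : (arcOf G e').1.1 = sInf2 e'.val := by simp [arcOf, hadj]
            have h1 : (Sum.inl u : RVert G (3 * (d + 1)) d) =
                toVert G (3 * (d + 1)) d (arcOf G e') ⟨0, by omega⟩ := by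
              rw [toVert_zero, ha1, hu]
            simp only [embF, if_pos hadj]
            rw [h1]
            exact repl_step' G d _ hne _ _ (by dsimp only; omega) (by dsimp only; omega)
          · have ha2 : (arcOf G e').1.2 = sInf2 e'.val := by simp [arcOf, hadj]
            have h1 : (Sum.inl u : RVert G (3 * (d + 1)) d) =
                toVert G (3 * (d + 1)) d (arcOf G e') ⟨d + 1, by omega⟩ := by
              rw [toVert_dsucc, ha2, hu]
            simp only [embF, if_neg hadj]
            rw [h1]
            exact (repl_step' G d _ hne _ _ (by dsimp only; omega) (by dsimp only; omega)).symm
        · have hu : u = sSup2 e'.val :=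
            le_antisymm (le_sSup2 _ _ hmem) (hmax _ (sSup2_mem _))
          by_cases hadj : G.Adj (sInf2 e'.val) (sSup2 e'.val)
          · have ha2 : (arcOf G e').1.2 = sSup2 e'.val := by simp [arcOf, hadj]
            have h1 : (Sum.inl u : RVert G (3 * (d + 1)) d) =
                toVert G (3 * (d + 1)) d (arcOf G e') ⟨d + 1, by omega⟩ := by
              rw [toVert_dsucc, ha2, hu]
            simp only [embF, if_pos hadj]
            rw [h1]
            exact (repl_step' G d _ hne _ _ (by dsimp only; omega) (by dsimp only; omega)).symm
          · have ha1 : (arcOf G e').1.1 = sSup2 e'.val := by simp [arcOf, hadj]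
            have h1 : (Sum.inl u : RVert G (3 * (d + 1)) d) =
                toVert G (3 * (d + 1)) d (arcOf G e') ⟨0, by omega⟩ := by
              rw [toVert_zero, ha1, hu]
            simp only [embF, if_neg hadj]
            rw [h1]
            exact repl_step' G d _ hne _ _ (by dsimp only; omega) (by dsimp only; omega)
      · exact h.elim
      · obtain ⟨rfl, hij⟩ := h
        have hiLt := i.isLt
        have hjLt := j.isLt
        have hne := arcOf_ne G e
        by_cases hadj : G.Adj (sInf2 e.val) (sSup2 e.val)
        · simp only [embF, if_pos hadj]
          exact repl_step' G d _ hne _ _ (by dsimp only; omega) (by dsimp only; omega)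
        · simp only [embF, if_neg hadj]
          exact (repl_step' G d _ hne _ _ (by dsimp only; omega) (by dsimp only; omega)).symm
    intro x y hxy
    rcases hxy with h | h
    · exact key _ _ h
    · exact (key _ _ h).symm
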